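/- Let d ≥ 3 be an integer, let (μ_j)_{j∈ℕ} be a nondecreasing sequence of positive reals with smallest element μ_0 > 0, and suppose there exists C > 0 such that #{j : μ_j ≤ μ} ≤ C·μ^{d-1} for all μ > 1. Let Ω be a set and let (u_j)_{j∈ℕ} be functions u_j : Ω → ℂ satisfying |u_j(y)| ≤ C·μ_j^{(d-1)/2} for all j and all y ∈ Ω. Then there exists a constant C' > 0 such that for all y, y' ∈ Ω and every real s with 0 < s ≤ 1/2, the series ∑_{j} μ_j^{-1} · |u_j(y)| · |u_j(y')| · s^{μ_j} converges and its sum is at most C' · s^{μ_0}. -/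

import Mathlib

open Real

lemma aux_pow_le_exp {a t : ℝ} (ha : 0 < a) (ht : 0 ≤ t) (n : ℕ) :
    t ^ n ≤ (n.factorial : ℝ) / a ^ n * Real.exp (a * t) := by
  have h := Real.pow_div_factorial_le_exp (a*t) (mul_nonneg ha.le ht) n
  have hfac : (0:ℝ) < (n.factorial : ℝ) := by exact_mod_cast n.factorial_pos
  rw [div_le_iff₀ hfac] at h
  rw [mul_pow] at h
  rw [div_mul_eq_mul_div, le_div_iff₀ (pow_pos ha n)]
  nlinarith [pow_pos ha n, Real.exp_pos (a*t)]

lemma aux_exp_neg_le {x : ℝ} (hx : 0 < x) (n : ℕ) :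
    Real.exp (-x) ≤ (n.factorial : ℝ) / x ^ n := by
  have h := Real.pow_div_factorial_le_exp x hx.le n
  have hfac : (0:ℝ) < (n.factorial : ℝ) := by exact_mod_cast n.factorial_pos
  rw [div_le_iff₀ hfac] at h
  rw [Real.exp_neg, inv_le_comm₀ (Real.exp_pos x) (by positivity), inv_div, div_le_iff₀ hfac]
  linarith


/-- Let `d ≥ 3`, let `(μ_j)` be a nondecreasing sequence of positive reals
(so its smallest element is `μ_0 > 0`) satisfying the Weyl-type counting bound
`#{j : μ_j ≤ m} ≤ C·m^{d-1}` for `m > 1`, and let `u_j : Ω → ℂ` satisfy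
`|u_j(y)| ≤ C·μ_j^{(d-1)/2}`. Then there is `C' > 0` such that for all `y, y' ∈ Ω` and all
`0 < s ≤ 1/2` the series `∑_j μ_j^{-1}·|u_j(y)|·|u_j(y')|·s^{μ_j}` converges with sum at most
`C' · s^{μ_0}`. -/
theorem statement13 (d : ℕ) (hd : 3 ≤ d) (μs : ℕ → ℝ) (hmono : Monotone μs)
    (hμpos : ∀ j, 0 < μs j)
    (C : ℝ) (hC : 0 < C)
    (hcount : ∀ m : ℝ, 1 < m →
      {j : ℕ | μs j ≤ m}.Finite ∧ (({j : ℕ | μs j ≤ m}.ncard : ℝ) ≤ C * m ^ ((d : ℝ) - 1)))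
    {Ω : Type*} (u : ℕ → Ω → ℂ)
    (hu : ∀ (j : ℕ) (y : Ω), ‖u j y‖ ≤ C * (μs j) ^ (((d : ℝ) - 1) / 2)) :
    ∃ C' : ℝ, 0 < C' ∧ ∀ (y y' : Ω) (s : ℝ), 0 < s → s ≤ 1 / 2 →
      Summable (fun j : ℕ =>
        (μs j)⁻¹ * ‖u j y‖ * ‖u j y'‖ * s ^ (μs j)) ∧
      (∑' j : ℕ, (μs j)⁻¹ * ‖u j y‖ * ‖u j y'‖ * s ^ (μs j))
        ≤ C' * s ^ (μs 0) := by
  have hd3 : (3:ℝ) ≤ (d:ℝ) := by exact_mod_cast hd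
  have hν0 : 0 < μs 0 := hμpos 0
  set ν := μs 0 with hνdef
  have hL : 0 < Real.log 2 := Real.log_pos (by norm_num)
  set L := Real.log 2 with hLdef
  have hdm1 : (0:ℝ) < (d:ℝ) - 1 := by linarith
  set r : ℝ := ((d:ℝ)-1)⁻¹ with hrdef
  have hr : 0 < r := inv_pos.mpr hdm1
  -- lower bound for μs j from the counting hypothesis
  have hlow : ∀ j : ℕ, ((j:ℝ)+1) ≤ C * (μs j + 2) ^ ((d:ℝ)-1) := by
    intro j
    set m : ℝ := max (μs j) 2 with hm
    have hm1 : (1:ℝ) < m := lt_of_lt_of_le one_lt_two (le_max_right _ _)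
    obtain ⟨hfin, hcard⟩ := hcount m hm1
    have hsub : (↑(Finset.Iic j) : Set ℕ) ⊆ {i : ℕ | μs i ≤ m} := by
      intro i hi
      simp only [Finset.coe_Iic, Set.mem_Iic] at hi
      exact Set.mem_setOf.mpr (le_trans (hmono hi) (le_max_left _ _))
    have hcard2 : (Finset.Iic j).card ≤ {i : ℕ | μs i ≤ m}.ncard := by
      rw [← Set.ncard_coe_finset]
      exact Set.ncard_le_ncard hsub hfin
    have h1 : ((j:ℝ)+1) ≤ ({i : ℕ | μs i ≤ m}.ncard : ℝ) := by
      rw [Nat.card_Iic] at hcard2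
      exact_mod_cast hcard2
    have hm2 : m ≤ μs j + 2 := max_le (by linarith) (by linarith [(hμpos j).le])
    calc ((j:ℝ)+1) ≤ C * m ^ ((d:ℝ)-1) := h1.trans hcard
      _ ≤ C * (μs j + 2) ^ ((d:ℝ)-1) := by
          apply mul_le_mul_of_nonneg_left _ hC.le
          exact Real.rpow_le_rpow (by linarith) hm2 hdm1.le
  have hlow2 : ∀ j : ℕ, ((j:ℝ)+1) ^ r / C ^ r ≤ μs j + 2 := by
    intro j
    have h1 : (((j:ℝ)+1)) ^ r ≤ (C * (μs j + 2) ^ ((d:ℝ)-1)) ^ r :=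
      Real.rpow_le_rpow (by positivity) (hlow j) hr.le
    have h2 : (0:ℝ) ≤ μs j + 2 := by linarith [(hμpos j).le]
    rw [Real.mul_rpow hC.le (Real.rpow_nonneg h2 _), ← Real.rpow_mul h2,
      mul_inv_cancel₀ hdm1.ne', Real.rpow_one] at h1
    rw [div_le_iff₀ (Real.rpow_pos_of_pos hC r)]
    linarith
  -- constants
  set n : ℕ := d - 2 with hndef
  set N : ℕ := 2*(d-1) with hNdef
  have hncast : ((n:ℕ):ℝ) = (d:ℝ) - 2 := by
    rw [hndef, Nat.cast_sub (by omega)]; norm_num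
  have hNcast : ((N:ℕ):ℝ) = 2*((d:ℝ)-1) := by
    rw [hNdef, Nat.cast_mul, Nat.cast_sub (by omega)]; norm_num
  set κ : ℝ := L / (2 * C ^ r) with hκdef
  have hκ : 0 < κ := by
    apply div_pos hL
    positivity
  set M₁ : ℝ := (n.factorial : ℝ) / (L/2)^n with hM1def
  have hM1 : 0 < M₁ := by positivity
  set M₂ : ℝ := (N.factorial : ℝ) / κ^N with hM2def
  have hM2 : 0 < M₂ := by positivity
  set A : ℝ := C^2 * M₁ * Real.exp (ν * L) * Real.exp L * M₂ with hAdef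
  have hA : 0 < A := by positivity
  -- per-term bound for the dominating series
  set G : ℕ → ℝ := fun j => C^2 * (μs j) ^ ((d:ℝ)-2) * ((1:ℝ)/2) ^ (μs j - ν) with hGdef
  have hGnn : ∀ j, 0 ≤ G j := by
    intro j
    have := (hμpos j).le
    positivity
  have hG : ∀ j : ℕ, G j ≤ A / ((j:ℝ)+1)^2 := by
    intro j
    set x := μs j with hxdef
    have hx : 0 < x := hμpos j
    set p : ℝ := (j:ℝ)+1 with hpdef
    have hp : (1:ℝ) ≤ p := by simp [hpdef]
    have hp0 : (0:ℝ) < p := by linarith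
    -- rewrite pieces
    have e1 : x ^ ((d:ℝ)-2) = x ^ n := by
      rw [← hncast, Real.rpow_natCast]
    have e2 : ((1:ℝ)/2) ^ (x - ν) = Real.exp (ν * L) * Real.exp (-(L * x)) := by
      rw [Real.rpow_def_of_pos (by norm_num : (0:ℝ) < 1/2), one_div, Real.log_inv, ← hLdef,
        ← Real.exp_add]
      ring_nf
    have e3 : x ^ n ≤ M₁ * Real.exp (L/2 * x) := by
      have := aux_pow_le_exp (a := L/2) (by linarith) hx.le n
      rw [← hM1def] at this
      linarith
    -- exp decay chain
    have e4 : Real.exp (-(L * x)) * Real.exp (L/2 * x) = Real.exp (-(L/2*x)) := by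
      rw [← Real.exp_add]; ring_nf
    have e5 : Real.exp (-(L/2*x)) ≤ Real.exp L * Real.exp (-(κ * p ^ r)) := by
      rw [← Real.exp_add, Real.exp_le_exp]
      have h1 := hlow2 j
      have hCr : (0:ℝ) < C ^ r := Real.rpow_pos_of_pos hC r
      have h2 : κ * p ^ r = L / 2 * (p ^ r / C ^ r) := by
        rw [hκdef]; field_simp
      nlinarith [h1]
    have e6 : Real.exp (-(κ * p ^ r)) ≤ M₂ / p^2 := by
      have hppos : (0:ℝ) < p ^ r := Real.rpow_pos_of_pos hp0 r
      have h1 := aux_exp_neg_le (mul_pos hκ hppos) N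
      have h2 : (κ * p ^ r)^N = κ^N * p^2 := by
        rw [mul_pow, ← Real.rpow_natCast (p ^ r) N, ← Real.rpow_mul hp0.le]
        have : r * (N:ℝ) = 2 := by
          rw [hNcast, hrdef]; field_simp
        rw [this]
        norm_num [Real.rpow_two]
      rw [h2] at h1
      calc Real.exp (-(κ * p ^ r)) ≤ (N.factorial : ℝ) / (κ^N * p^2) := h1
        _ = M₂ / p^2 := by rw [hM2def]; field_simp
    -- assemble
    have key : G j ≤ C^2 * (M₁ * Real.exp (L/2*x)) * (Real.exp (ν*L) * Real.exp (-(L*x))) := by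
      rw [hGdef]
      simp only [← hxdef]
      rw [e1, e2]
      have h1 : (0:ℝ) ≤ Real.exp (ν*L) * Real.exp (-(L*x)) := by positivity
      exact mul_le_mul_of_nonneg_right (mul_le_mul_of_nonneg_left e3 (sq_nonneg C)) h1
    calc G j ≤ C^2 * (M₁ * Real.exp (L/2*x)) * (Real.exp (ν*L) * Real.exp (-(L*x))) := key
      _ = C^2 * M₁ * Real.exp (ν*L) * Real.exp (-(L/2*x)) := by
          rw [← e4]; ring
      _ ≤ C^2 * M₁ * Real.exp (ν*L) * (Real.exp L * Real.exp (-(κ * p ^ r))) := by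
          have h0 : (0:ℝ) ≤ C^2 * M₁ * Real.exp (ν*L) := by positivity
          exact mul_le_mul_of_nonneg_left e5 h0
      _ ≤ C^2 * M₁ * Real.exp (ν*L) * (Real.exp L * (M₂ / p^2)) := by
          have h0 : (0:ℝ) ≤ C^2 * M₁ * Real.exp (ν*L) := by positivity
          exact mul_le_mul_of_nonneg_left
            (mul_le_mul_of_nonneg_left e6 (Real.exp_pos L).le) h0
      _ = A / p^2 := by rw [hAdef]; ring
  -- the dominating series is summable
  have hbase : Summable (fun j : ℕ => A / ((j:ℝ)+1)^2) := by
    have h0 : Summable (fun n : ℕ => 1/(n:ℝ)^2) :=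
      Real.summable_one_div_nat_pow.mpr one_lt_two
    have h1 : Summable (fun j : ℕ => 1/((j:ℝ)+1)^2) := by
      have := (summable_nat_add_iff 1).mpr h0
      simpa [Nat.cast_add, Nat.cast_one] using this
    simpa [div_eq_mul_inv] using h1.mul_left A
  have hGsum : Summable G := Summable.of_nonneg_of_le hGnn hG hbase
  set K : ℝ := ∑' j, G j with hKdef
  have hK0 : 0 ≤ K := tsum_nonneg hGnn
  refine ⟨K + 1, by linarith, ?_⟩
  intro y y' s hs hs2
  have hsν : 0 < s ^ ν := Real.rpow_pos_of_pos hs ν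
  set f : ℕ → ℝ := fun j => (μs j)⁻¹ * ‖u j y‖ * ‖u j y'‖ * s ^ (μs j)
    with hfdef
  have hfnn : ∀ j, 0 ≤ f j := by
    intro j
    have hx := hμpos j
    have := norm_nonneg (u j y)
    have := norm_nonneg (u j y')
    have := Real.rpow_nonneg hs.le (μs j)
    positivity
  have hfle : ∀ j, f j ≤ s ^ ν * G j := by
    intro j
    set x := μs j with hxdef
    have hx : 0 < x := hμpos j
    have h1 : ‖u j y‖ ≤ C * x ^ (((d:ℝ)-1)/2) := hu j y
    have h2 : ‖u j y'‖ ≤ C * x ^ (((d:ℝ)-1)/2) := hu j y'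
    have hq : (0:ℝ) ≤ x ^ (((d:ℝ)-1)/2) := (Real.rpow_pos_of_pos hx _).le
    have step1 : f j ≤ x⁻¹ * (C * x ^ (((d:ℝ)-1)/2)) * (C * x ^ (((d:ℝ)-1)/2)) * s ^ x := by
      rw [hfdef]
      simp only [← hxdef]
      have hsx : (0:ℝ) ≤ s ^ x := Real.rpow_nonneg hs.le x
      have hxi : (0:ℝ) ≤ x⁻¹ := (inv_pos.mpr hx).le
      exact mul_le_mul_of_nonneg_right
        (mul_le_mul (mul_le_mul_of_nonneg_left h1 hxi) h2 (norm_nonneg _)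
          (by positivity)) hsx
    have hxq : x ^ (((d:ℝ)-1)/2) * x ^ (((d:ℝ)-1)/2) = x ^ ((d:ℝ)-1) := by
      rw [← Real.rpow_add hx]; congr 1; ring
    have hx1 : x⁻¹ * x ^ ((d:ℝ)-1) = x ^ ((d:ℝ)-2) := by
      rw [← Real.rpow_neg_one x, ← Real.rpow_add hx]; congr 1; ring
    have eq1 : x⁻¹ * (C * x ^ (((d:ℝ)-1)/2)) * (C * x ^ (((d:ℝ)-1)/2)) = C^2 * x ^ ((d:ℝ)-2) := by
      calc x⁻¹ * (C * x ^ (((d:ℝ)-1)/2)) * (C * x ^ (((d:ℝ)-1)/2))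
          = C^2 * (x⁻¹ * (x ^ (((d:ℝ)-1)/2) * x ^ (((d:ℝ)-1)/2))) := by ring
        _ = C^2 * (x⁻¹ * x ^ ((d:ℝ)-1)) := by rw [hxq]
        _ = C^2 * x ^ ((d:ℝ)-2) := by rw [hx1]
    have eq2 : s ^ x = s ^ ν * s ^ (x - ν) := by
      rw [← Real.rpow_add hs]; ring_nf
    have le3 : s ^ (x - ν) ≤ ((1:ℝ)/2) ^ (x - ν) :=
      Real.rpow_le_rpow hs.le hs2 (sub_nonneg.mpr (hmono (Nat.zero_le j)))
    calc f j ≤ x⁻¹ * (C * x ^ (((d:ℝ)-1)/2)) * (C * x ^ (((d:ℝ)-1)/2)) * s ^ x := step1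
      _ = C^2 * x ^ ((d:ℝ)-2) * (s ^ ν * s ^ (x - ν)) := by rw [eq1, eq2]
      _ ≤ C^2 * x ^ ((d:ℝ)-2) * (s ^ ν * ((1:ℝ)/2) ^ (x - ν)) := by
          have h0 : (0:ℝ) ≤ C^2 * x ^ ((d:ℝ)-2) := by positivity
          exact mul_le_mul_of_nonneg_left
            (mul_le_mul_of_nonneg_left le3 hsν.le) h0
      _ = s ^ ν * G j := by rw [hGdef]; simp only [← hxdef]; ring
  have hsum : Summable f := Summable.of_nonneg_of_le hfnn hfle (hGsum.mul_left _)
  refine ⟨hsum, ?_⟩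
  calc (∑' j, f j) ≤ ∑' j, s ^ ν * G j := Summable.tsum_le_tsum hfle hsum (hGsum.mul_left _)
    _ = s ^ ν * K := tsum_mul_left
    _ ≤ (K + 1) * s ^ ν := by nlinarith
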